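/- For every integer i with 0 ≤ i ≤ k ≤ n, one has (k^k / n^k) · C(n,i) ≤ k^i / i!. -/

import Mathlib

/-- For `0 ≤ i ≤ k ≤ n`, `(k^k / n^k) · C(n,i) ≤ k^i / i!`. -/
theorem binom_key_step (n k i : ℕ) (hik : i ≤ k) (hkn : k ≤ n) :
    ((k : ℝ) ^ k / (n : ℝ) ^ k) * (n.choose i : ℝ) ≤ (k : ℝ) ^ i / (i.factorial : ℝ) := by
  rcases Nat.eq_zero_or_pos k with hk | hk
  · subst hk
    interval_cases i
    simp
  have hn : 0 < n := lt_of_lt_of_le hk hkn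
  have hnR : (0:ℝ) < n := by exact_mod_cast hn
  have h1 : ((k : ℝ) ^ k / (n : ℝ) ^ k) ≤ ((k : ℝ) / n) ^ i := by
    rw [← div_pow]
    refine pow_le_pow_of_le_one (by positivity) ?_ hik
    rw [div_le_one hnR]
    exact_mod_cast hkn
  calc ((k : ℝ) ^ k / (n : ℝ) ^ k) * (n.choose i : ℝ)
      ≤ ((k : ℝ) / n) ^ i * (n.choose i : ℝ) := by
        apply mul_le_mul_of_nonneg_right h1 (by positivity)
    _ ≤ ((k : ℝ) / n) ^ i * ((n:ℝ) ^ i / i.factorial) := by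
        apply mul_le_mul_of_nonneg_left (Nat.choose_le_pow_div i n) (by positivity)
    _ = (k : ℝ) ^ i / (i.factorial : ℝ) := by
        field_simp
        rw [div_pow, div_mul_cancel₀ _ (pow_ne_zero _ hnR.ne')]
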